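/- Let A be an n×n matrix over a field k that is alternating, i.e., Aᵀ = −A and all diagonal entries of A are 0 (the diagonal condition being imposed separately to cover characteristic 2). Then the rank of A is even. -/

import Mathlib

open Matrix FiniteDimensional Module

open LinearMap (BilinForm)

/-- A nondegenerate alternating bilinear form on a finite-dimensional vector space
forces the dimension to be even. -/
lemma even_finrank_of_nondegenerate_alt (k : Type*) [Field k] :
    ∀ (N : ℕ) (V : Type*) [AddCommGroup V] [Module k V] [FiniteDimensional k V],
      finrank k V = N → ∀ B : BilinForm k V, B.IsAlt → B.Nondegenerate → Even N := by
  intro N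
  induction N using Nat.strong_induction_on with
  | _ N ih =>
    intro V _ _ _ hdim B hAlt hNd
    rcases Nat.eq_zero_or_pos N with h0 | hpos
    · simp [h0]
    have hV : Nontrivial V := by
      rw [← Module.finrank_pos_iff (R := k)]; omega
    obtain ⟨x, hx⟩ := exists_ne (0 : V)
    have hxy : ∃ y, B x y ≠ 0 := by
      by_contra h
      push_neg at h
      exact hx (hNd.1 x h)
    obtain ⟨y, hxy⟩ := hxy
    have hyx : B y x ≠ 0 := by
      rw [← hAlt.neg_eq]; simpa using hxy
    set W : Submodule k V := Submodule.span k {x, y} with hW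
    have hrefl : B.IsRefl := hAlt.isRefl
    -- the restriction of B to W is nondegenerate
    have hWnd : (B.restrict W).Nondegenerate := by
      refine (LinearMap.IsRefl.nondegenerate_iff_separatingLeft (B := B.restrict W) (fun a b h => hrefl _ _ h)).mpr ?_
      rintro ⟨w, hw⟩ hw0
      have hmem : x ∈ W := Submodule.subset_span (by simp)
      have hmemy : y ∈ W := Submodule.subset_span (by simp)
      obtain ⟨a, b, hab⟩ := Submodule.mem_span_pair.mp hw
      have hwx : B w x = 0 := hw0 ⟨x, hmem⟩
      have hwy : B w y = 0 := hw0 ⟨y, hmemy⟩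
      have hb : b = 0 := by
        have : B w x = b * B y x := by
          rw [← hab]; simp [hAlt x]
        rw [hwx] at this
        exact (mul_eq_zero.mp this.symm).resolve_right hyx
      have ha : a = 0 := by
        have : B w y = a * B x y := by
          rw [← hab]; simp [hAlt y, hb]
        rw [hwy] at this
        exact (mul_eq_zero.mp this.symm).resolve_right hxy
      ext
      simp [← hab, ha, hb]
    have hcompl : IsCompl W (B.orthogonal W) :=
      LinearMap.BilinForm.isCompl_orthogonal_of_restrict_nondegenerate hrefl hWnd
    -- dimension of W is 2
    have hli : LinearIndependent k ![x, y] := by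
      rw [LinearIndependent.pair_iff]
      intro s t hst
      have h1 : B (s • x + t • y) x = t * B y x := by simp [hAlt x]
      have h2 : B (s • x + t • y) y = s * B x y := by simp [hAlt y]
      rw [hst] at h1 h2
      simp only [map_zero, LinearMap.zero_apply] at h1 h2
      constructor
      · exact (mul_eq_zero.mp h2.symm).resolve_right hxy
      · exact (mul_eq_zero.mp h1.symm).resolve_right hyx
    have hWdim : finrank k W = 2 := by
      have hset : Set.range ![x, y] = ({x, y} : Set V) := by
        ext z
        constructor
        · rintro ⟨i, rfl⟩; fin_cases i <;> simp
        · rintro (rfl | rfl)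
          · exact ⟨0, by simp⟩
          · exact ⟨1, by simp⟩
      have : W = Submodule.span k (Set.range ![x, y]) := by rw [hset]
      rw [this, finrank_span_eq_card hli]
      simp
    -- restriction to the orthogonal complement is nondegenerate
    have horthnd : (B.restrict (B.orthogonal W)).Nondegenerate := by
      rw [LinearMap.BilinForm.restrict_nondegenerate_iff_isCompl_orthogonal hrefl,
        LinearMap.BilinForm.orthogonal_orthogonal hNd hrefl]
      exact hcompl.symm
    -- restriction is alternating
    have horthalt : (B.restrict (B.orthogonal W)).IsAlt := fun z => hAlt z
    have hsum : finrank k W + finrank k (B.orthogonal W) = N := by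
      rw [← hdim]
      exact Submodule.finrank_add_eq_of_isCompl hcompl
    have hlt : finrank k (B.orthogonal W) < N := by omega
    have heven : Even (finrank k (B.orthogonal W)) :=
      ih _ hlt (B.orthogonal W) rfl _ horthalt horthnd
    obtain ⟨m, hm⟩ := heven
    exact ⟨1 + m, by omega⟩

/-- An alternating `n×n` matrix over a field (i.e. `Aᵀ = -A` with all diagonal entries `0`,
the latter imposed separately to cover characteristic 2) has even rank. -/
theorem rank_alternating_even (k : Type*) [Field k] (n : ℕ)
    (A : Matrix (Fin n) (Fin n) k) (hA : Aᵀ = -A) (hdiag : ∀ i, A i i = 0) :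
    Even A.rank := by
  classical
  set B : BilinForm k (Fin n → k) := Matrix.toBilin' A with hB
  have hskew : ∀ i j, A j i = -A i j := by
    intro i j
    have := congrFun (congrFun hA i) j
    simpa using this
  -- B is alternating
  have hAlt : B.IsAlt := by
    intro v
    rw [hB, Matrix.toBilin'_apply, ← Finset.sum_product']
    apply Finset.sum_ninvolution (fun p => (p.2, p.1))
    · rintro ⟨i, j⟩
      simp only
      rw [hskew i j]
      ring
    · rintro ⟨i, j⟩ h hij
      apply h
      have : i = j := (Prod.ext_iff.mp hij).2
      subst this
      simp [hdiag]
    · intro a; simp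
    · intro a; simp
  have hrefl : B.IsRefl := hAlt.isRefl
  -- kernel of B equals kernel of Aᵀ.mulVecLin
  have hker : LinearMap.ker B = LinearMap.ker Aᵀ.mulVecLin := by
    ext v
    simp only [LinearMap.mem_ker]
    constructor
    · intro hv
      have h1 : ∀ j, B v (Pi.single j 1) = 0 := by
        intro j; rw [hv]; rfl
      funext j
      have := h1 j
      rw [hB, Matrix.toBilin'_apply] at this
      simp only [Pi.single_apply, mul_ite, mul_one, mul_zero, Finset.sum_ite_eq',
        Finset.mem_univ, if_true] at this
      simpa [Matrix.mulVecLin_apply, Matrix.mulVec, Matrix.vecMul, dotProduct,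
        Matrix.transpose_apply, mul_comm] using this
    · intro hv
      refine LinearMap.ext fun w => ?_
      show B v w = 0
      rw [hB, Matrix.toBilin'_apply]
      have hj : ∀ j, ∑ i, v i * A i j = 0 := by
        intro j
        have := congrFun hv j
        simpa [Matrix.mulVecLin_apply, Matrix.mulVec, Matrix.vecMul, dotProduct,
          Matrix.transpose_apply, mul_comm] using this
      calc ∑ i, ∑ j, v i * A i j * w j = ∑ j, (∑ i, v i * A i j) * w j := by
            rw [Finset.sum_comm]
            simp [Finset.sum_mul]
          _ = 0 := by simp [hj]
  -- dimension bookkeeping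
  have hrank : A.rank + finrank k (LinearMap.ker B) = n := by
    rw [hker, ← Matrix.rank_transpose A]
    have := LinearMap.finrank_range_add_finrank_ker (Aᵀ.mulVecLin)
    rw [Matrix.rank] at *
    simpa using this
  obtain ⟨W, hW⟩ := Submodule.exists_isCompl (LinearMap.ker B)
  have hWrank : finrank k W = A.rank := by
    have h1 := Submodule.finrank_add_eq_of_isCompl hW
    rw [Module.finrank_fin_fun] at h1
    omega
  -- restriction of B to W is nondegenerate
  have hWnd : (B.restrict W).Nondegenerate := by
    refine (LinearMap.IsRefl.nondegenerate_iff_separatingLeft (B := B.restrict W) (fun a b h => hrefl _ _ h)).mpr ?_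
    rintro ⟨w, hw⟩ hw0
    have hwker : w ∈ LinearMap.ker B := by
      rw [LinearMap.mem_ker]
      refine LinearMap.ext fun v => ?_
      have hv : v ∈ (LinearMap.ker B) ⊔ W := by rw [hW.sup_eq_top]; trivial
      obtain ⟨u, hu, w', hw', rfl⟩ := Submodule.mem_sup.mp hv
      have h1 : B w u = 0 := hrefl u w (by rw [LinearMap.mem_ker] at hu; rw [hu]; rfl)
      have h2 : B w w' = 0 := hw0 ⟨w', hw'⟩
      simp [h1, h2]
    have : w ∈ (LinearMap.ker B) ⊓ W := ⟨hwker, hw⟩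
    rw [hW.inf_eq_bot, Submodule.mem_bot] at this
    exact Subtype.ext this
  have hWalt : (B.restrict W).IsAlt := fun z => hAlt z
  have := even_finrank_of_nondegenerate_alt k (finrank k W) W rfl _ hWalt hWnd
  rwa [hWrank] at this
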